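/- Let v₀ = (1,0), v₁ = (1/√3)(1,√2) ∈ ℂ², let ζ be a complex number with |ζ| = 1, and set v₂ = D v₁, v₃ = D² v₁ where D = diag(1, ζ). Then {v₀,v₁,v₂,v₃} is a SIC-POVM (all pairwise inner products have absolute value 1/√3) if and only if ζ is a primitive cube root of unity. -/

import Mathlib

open Matrix Complex

noncomputable def v₀ : Fin 2 → ℂ := ![1, 0]
noncomputable def v₁ : Fin 2 → ℂ :=
  ((Real.sqrt 3 : ℂ)⁻¹) • ![1, (Real.sqrt 2 : ℂ)]

section
variable (ζ : ℂ)

local notation "D" => Matrix.diagonal ![(1:ℂ), ζ]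

lemma h2' : ((Real.sqrt 2 : ℝ) : ℂ)^2 = 2 := by
  norm_cast; exact Real.sq_sqrt (by norm_num)

lemma h3' : ((Real.sqrt 3 : ℝ) : ℂ)^2 = 3 := by
  norm_cast; exact Real.sq_sqrt (by norm_num)

lemma h3ne : ((Real.sqrt 3 : ℝ) : ℂ) ≠ 0 := by
  simpa using Real.sqrt_ne_zero'.mpr (by norm_num : (0:ℝ) < 3)

lemma d11 : star v₁ ⬝ᵥ v₁ = 1 := by
  simp [v₁, dotProduct, Fin.sum_univ_two, _root_.map_mul]
  field_simp
  linear_combination h2' - h3'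

lemma d22 (hc : (starRingEnd ℂ) ζ * ζ = 1) :
    star ((D).mulVec v₁) ⬝ᵥ (D).mulVec v₁ = 1 := by
  simp [v₁, Matrix.mulVec_diagonal, dotProduct, Fin.sum_univ_two, _root_.map_mul]
  field_simp
  linear_combination (((Real.sqrt 2:ℝ):ℂ)^2) * hc + h2' - h3'

lemma d33 (hc : (starRingEnd ℂ) ζ * ζ = 1) :
    star ((D^2).mulVec v₁) ⬝ᵥ (D^2).mulVec v₁ = 1 := by
  simp [v₁, Matrix.mulVec_diagonal, dotProduct, Fin.sum_univ_two,
    Matrix.diagonal_pow, _root_.map_mul]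
  field_simp
  linear_combination (((Real.sqrt 2:ℝ):ℂ)^2) * (((starRingEnd ℂ) ζ) * ζ + 1) * hc + h2' - h3'

lemma d01 : star v₀ ⬝ᵥ v₁ = ((Real.sqrt 3 : ℝ) : ℂ)⁻¹ := by
  simp [v₀, v₁, dotProduct, Fin.sum_univ_two, _root_.map_mul]

lemma d02 : star v₀ ⬝ᵥ (D).mulVec v₁ = ((Real.sqrt 3 : ℝ) : ℂ)⁻¹ := by
  simp [v₀, v₁, Matrix.mulVec_diagonal, dotProduct, Fin.sum_univ_two, _root_.map_mul]

lemma d03 : star v₀ ⬝ᵥ (D^2).mulVec v₁ = ((Real.sqrt 3 : ℝ) : ℂ)⁻¹ := by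
  simp [v₀, v₁, Matrix.mulVec_diagonal, dotProduct, Fin.sum_univ_two,
    Matrix.diagonal_pow, _root_.map_mul]

lemma d10 : star v₁ ⬝ᵥ v₀ = ((Real.sqrt 3 : ℝ) : ℂ)⁻¹ := by
  simp [v₀, v₁, dotProduct, Fin.sum_univ_two, _root_.map_mul]

lemma d20 : star ((D).mulVec v₁) ⬝ᵥ v₀ = ((Real.sqrt 3 : ℝ) : ℂ)⁻¹ := by
  simp [v₀, v₁, Matrix.mulVec_diagonal, dotProduct, Fin.sum_univ_two, _root_.map_mul]

lemma d30 : star ((D^2).mulVec v₁) ⬝ᵥ v₀ = ((Real.sqrt 3 : ℝ) : ℂ)⁻¹ := by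
  simp [v₀, v₁, Matrix.mulVec_diagonal, dotProduct, Fin.sum_univ_two,
    Matrix.diagonal_pow, _root_.map_mul]

lemma d12 : star v₁ ⬝ᵥ (D).mulVec v₁ = (1 + 2*ζ)/3 := by
  simp [v₁, Matrix.mulVec_diagonal, dotProduct, Fin.sum_univ_two, _root_.map_mul]
  field_simp
  linear_combination 3*ζ*h2' - (2*ζ+1)*h3'

lemma d21 : star ((D).mulVec v₁) ⬝ᵥ v₁ = (1 + 2*(starRingEnd ℂ) ζ)/3 := by
  simp [v₁, Matrix.mulVec_diagonal, dotProduct, Fin.sum_univ_two, _root_.map_mul]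
  field_simp
  linear_combination 3*((starRingEnd ℂ) ζ)*h2' - (2*((starRingEnd ℂ) ζ)+1)*h3'

lemma d13 : star v₁ ⬝ᵥ (D^2).mulVec v₁ = (1 + 2*ζ^2)/3 := by
  simp [v₁, Matrix.mulVec_diagonal, dotProduct, Fin.sum_univ_two,
    Matrix.diagonal_pow, _root_.map_mul]
  field_simp
  linear_combination 3*ζ^2*h2' - (2*ζ^2+1)*h3'

lemma d31 : star ((D^2).mulVec v₁) ⬝ᵥ v₁ = (1 + 2*((starRingEnd ℂ) ζ)^2)/3 := by
  simp [v₁, Matrix.mulVec_diagonal, dotProduct, Fin.sum_univ_two,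
    Matrix.diagonal_pow, _root_.map_mul]
  field_simp
  linear_combination 3*((starRingEnd ℂ) ζ)^2*h2' - (2*((starRingEnd ℂ) ζ)^2+1)*h3'

lemma d23 (hc : (starRingEnd ℂ) ζ * ζ = 1) :
    star ((D).mulVec v₁) ⬝ᵥ (D^2).mulVec v₁ = (1 + 2*ζ)/3 := by
  simp [v₁, Matrix.mulVec_diagonal, dotProduct, Fin.sum_univ_two,
    Matrix.diagonal_pow, _root_.map_mul]
  field_simp
  linear_combination 3*(((Real.sqrt 2:ℝ):ℂ)^2)*ζ*hc + 3*ζ*h2' - (2*ζ+1)*h3'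

lemma d32 (hc : (starRingEnd ℂ) ζ * ζ = 1) :
    star ((D^2).mulVec v₁) ⬝ᵥ (D).mulVec v₁ = (1 + 2*(starRingEnd ℂ) ζ)/3 := by
  simp [v₁, Matrix.mulVec_diagonal, dotProduct, Fin.sum_univ_two,
    Matrix.diagonal_pow, _root_.map_mul]
  field_simp
  linear_combination 3*(((Real.sqrt 2:ℝ):ℂ)^2)*((starRingEnd ℂ) ζ)*hc + 3*((starRingEnd ℂ) ζ)*h2' - (2*((starRingEnd ℂ) ζ)+1)*h3'

end

lemma habs_s : ‖(((Real.sqrt 3 : ℝ) : ℂ)⁻¹)‖ = (Real.sqrt 3)⁻¹ := by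
  rw [norm_inv, Complex.norm_real, Real.norm_of_nonneg (Real.sqrt_nonneg 3)]

lemma habs_div3 (z : ℂ) :
    ‖(z/3)‖ = (Real.sqrt 3)⁻¹ ↔ ‖z‖ = Real.sqrt 3 := by
  have h33 : Real.sqrt 3 * Real.sqrt 3 = 3 := Real.mul_self_sqrt (by norm_num)
  have h3pos : (0:ℝ) < Real.sqrt 3 := Real.sqrt_pos.mpr (by norm_num)
  have hab3 : ‖(3:ℂ)‖ = 3 := by
    norm_num
  rw [norm_div, hab3, div_eq_iff (by norm_num : (3:ℝ) ≠ 0),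
    show (Real.sqrt 3)⁻¹ * 3 = Real.sqrt 3 from by field_simp; linarith]

lemma key (ζ : ℂ) (hζ : ‖ζ‖ = 1) :
    ‖(1 + 2*ζ)‖ = Real.sqrt 3 ↔ (ζ^3 = 1 ∧ ζ ≠ 1) := by
  have hns : Complex.normSq ζ = 1 := by
    rw [← Complex.sq_norm, hζ]; norm_num
  have hre2 : ζ.re^2 + ζ.im^2 = 1 := by
    simpa [Complex.normSq_apply, sq] using hns
  have habs2 : Complex.normSq (1 + 2*ζ) = 5 + 4*ζ.re := by
    simp [Complex.normSq_apply, Complex.add_re, Complex.add_im]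
    nlinarith [hre2]
  constructor
  · intro h
    have h3 : Complex.normSq (1 + 2*ζ) = 3 := by
      rw [← Complex.sq_norm, h, Real.sq_sqrt (by norm_num : (3:ℝ) ≥ 0)]
    have hrea : ζ.re = -1/2 := by rw [habs2] at h3; linarith
    have him : ζ.im^2 = 3/4 := by nlinarith [hre2]
    have hq : ζ^2 + ζ + 1 = 0 := by
      apply Complex.ext <;>
        simp [pow_two, Complex.add_re, Complex.add_im, Complex.mul_re, Complex.mul_im, hrea] <;>
        nlinarith [him]
    refine ⟨?_, ?_⟩
    · linear_combination (ζ - 1) * hq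
    · intro h1
      rw [h1] at hrea; norm_num at hrea
  · rintro ⟨h3, hne⟩
    have hq : ζ^2 + ζ + 1 = 0 := by
      have hfac : (ζ - 1) * (ζ^2 + ζ + 1) = 0 := by
        rw [show (ζ - 1) * (ζ^2 + ζ + 1) = ζ^3 - 1 by ring, h3, sub_self]
      rcases mul_eq_zero.mp hfac with h | h
      · exact absurd (by linear_combination h) hne
      · exact h
    have hrea : ζ.re = -1/2 := by
      have hconj : (starRingEnd ℂ) ζ = ζ^2 := by
        have hz0 : ζ ≠ 0 := by
          intro h0; rw [h0] at h3; norm_num at h3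
        rw [← Complex.inv_eq_conj hζ]
        field_simp
        linear_combination -h3
      have := Complex.add_conj ζ
      rw [hconj] at this
      have h2 : ζ + ζ^2 = -1 := by linear_combination hq
      have : ((2*ζ.re : ℝ) : ℂ) = -1 := by rw [← this]; linear_combination hq
      have hr : (2*ζ.re : ℝ) = -1 := by exact_mod_cast this
      linarith
    have h3' : Complex.normSq (1 + 2*ζ) = 3 := by rw [habs2, hrea]; ring
    rw [Complex.norm_def, h3']

theorem stmt10 (ζ : ℂ) (hζ : ‖ζ‖ = 1)
    (D : Matrix (Fin 2) (Fin 2) ℂ) (hD : D = Matrix.diagonal ![1, ζ])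
    (V : Fin 4 → (Fin 2 → ℂ))
    (hV : V = ![v₀, v₁, D.mulVec v₁, (D ^ 2).mulVec v₁]) :
    ((∀ j : Fin 4, star (V j) ⬝ᵥ V j = 1) ∧
      (∀ j k : Fin 4, j ≠ k →
        ‖(star (V j) ⬝ᵥ V k)‖ = (Real.sqrt 3)⁻¹)) ↔
      (ζ ^ 3 = 1 ∧ ζ ≠ 1) := by
  subst hD hV
  have hns : Complex.normSq ζ = 1 := by rw [← Complex.sq_norm, hζ]; norm_num
  have hcz : (starRingEnd ℂ) ζ * ζ = 1 := by
    rw [mul_comm, Complex.mul_conj]; exact_mod_cast hns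
  constructor
  · rintro ⟨-, hp⟩
    have e : ‖(star v₁ ⬝ᵥ (Matrix.diagonal ![(1:ℂ), ζ]).mulVec v₁)‖
        = (Real.sqrt 3)⁻¹ := hp 1 2 (by decide)
    rw [d12, habs_div3] at e
    exact (key ζ hζ).mp e
  · rintro ⟨hc3, hne⟩
    have ha1 : ‖(1 + 2*ζ)‖ = Real.sqrt 3 := (key ζ hζ).mpr ⟨hc3, hne⟩
    have ha2 : ‖(1 + 2*ζ^2)‖ = Real.sqrt 3 := by
      refine (key (ζ^2) (by rw [norm_pow, hζ]; norm_num)).mpr ⟨?_, ?_⟩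
      · rw [← pow_mul, show 2*3 = 3*2 by ring, pow_mul, hc3]; norm_num
      · intro h; exact hne (by linear_combination hc3 - ζ * h)
    have hconj1 : ‖(1 + 2*(starRingEnd ℂ) ζ)‖ = Real.sqrt 3 := by
      rw [show (1 + 2*(starRingEnd ℂ) ζ : ℂ) = (starRingEnd ℂ) (1 + 2*ζ) by
        simp [map_add, _root_.map_mul, map_ofNat], Complex.norm_conj]
      exact ha1
    have hconj2 : ‖(1 + 2*((starRingEnd ℂ) ζ)^2)‖ = Real.sqrt 3 := by
      rw [show (1 + 2*((starRingEnd ℂ) ζ)^2 : ℂ) = (starRingEnd ℂ) (1 + 2*ζ^2) by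
        simp [map_add, _root_.map_mul, map_pow, map_ofNat], Complex.norm_conj]
      exact ha2
    have n0 : star v₀ ⬝ᵥ v₀ = 1 := by
      simp [v₀, dotProduct, Fin.sum_univ_two]
    have a01 : ‖(star v₀ ⬝ᵥ v₁)‖ = (Real.sqrt 3)⁻¹ := by rw [d01]; exact habs_s
    have a02 : ‖(star v₀ ⬝ᵥ (Matrix.diagonal ![(1:ℂ), ζ]).mulVec v₁)‖
        = (Real.sqrt 3)⁻¹ := by rw [d02]; exact habs_s
    have a03 : ‖(star v₀ ⬝ᵥ ((Matrix.diagonal ![(1:ℂ), ζ])^2).mulVec v₁)‖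
        = (Real.sqrt 3)⁻¹ := by rw [d03]; exact habs_s
    have a10 : ‖(star v₁ ⬝ᵥ v₀)‖ = (Real.sqrt 3)⁻¹ := by rw [d10]; exact habs_s
    have a20 : ‖(star ((Matrix.diagonal ![(1:ℂ), ζ]).mulVec v₁) ⬝ᵥ v₀)‖
        = (Real.sqrt 3)⁻¹ := by rw [d20]; exact habs_s
    have a30 : ‖(star (((Matrix.diagonal ![(1:ℂ), ζ])^2).mulVec v₁) ⬝ᵥ v₀)‖
        = (Real.sqrt 3)⁻¹ := by rw [d30]; exact habs_s
    have a12 : ‖(star v₁ ⬝ᵥ (Matrix.diagonal ![(1:ℂ), ζ]).mulVec v₁)‖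
        = (Real.sqrt 3)⁻¹ := by rw [d12, habs_div3]; exact ha1
    have a21 : ‖(star ((Matrix.diagonal ![(1:ℂ), ζ]).mulVec v₁) ⬝ᵥ v₁)‖
        = (Real.sqrt 3)⁻¹ := by rw [d21, habs_div3]; exact hconj1
    have a13 : ‖(star v₁ ⬝ᵥ ((Matrix.diagonal ![(1:ℂ), ζ])^2).mulVec v₁)‖
        = (Real.sqrt 3)⁻¹ := by rw [d13, habs_div3]; exact ha2
    have a31 : ‖(star (((Matrix.diagonal ![(1:ℂ), ζ])^2).mulVec v₁) ⬝ᵥ v₁)‖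
        = (Real.sqrt 3)⁻¹ := by rw [d31, habs_div3]; exact hconj2
    have a23 : ‖(star ((Matrix.diagonal ![(1:ℂ), ζ]).mulVec v₁) ⬝ᵥ
        ((Matrix.diagonal ![(1:ℂ), ζ])^2).mulVec v₁)‖ = (Real.sqrt 3)⁻¹ := by
      rw [d23 ζ hcz, habs_div3]; exact ha1
    have a32 : ‖(star (((Matrix.diagonal ![(1:ℂ), ζ])^2).mulVec v₁) ⬝ᵥ
        (Matrix.diagonal ![(1:ℂ), ζ]).mulVec v₁)‖ = (Real.sqrt 3)⁻¹ := by
      rw [d32 ζ hcz, habs_div3]; exact hconj1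
    refine ⟨?_, ?_⟩
    · intro j; fin_cases j
      all_goals first
        | exact n0 | exact d11 | exact d22 ζ hcz | exact d33 ζ hcz
    · intro j k hjk; fin_cases j <;> fin_cases k
      all_goals first
        | exact absurd rfl hjk
        | exact a01 | exact a02 | exact a03
        | exact a10 | exact a12 | exact a13
        | exact a20 | exact a21 | exact a23
        | exact a30 | exact a31 | exact a32
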